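/- If (X, F) is a well-graded finite set system, then |ess_F(X)| + 1 ≤ |F| ≤ |E(G_F)| + 1, where ess_F(X) is the set of essential elements of X and E(G_F) is the edge set of the one-inclusion graph. In particular, every well-graded family satisfies |F| ≥ |ess_F(X)| + 1, i.e., has positive additionality. -/

import Mathlib

/-- The one-inclusion graph of a set system. -/
def oneInclusion {α : Type*} [DecidableEq α] (F : Finset (Finset α)) :
    SimpleGraph {A : Finset α // A ∈ F} where
  Adj A B := (symmDiff A.1 B.1).card = 1
  symm := by
    constructor
    intro A B h
    rwa [symmDiff_comm] at h
  loopless := by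
    constructor
    intro A h
    simp [symmDiff_self] at h

instance {α : Type*} [DecidableEq α] (F : Finset (Finset α)) :
    DecidableRel (oneInclusion F).Adj :=
  fun A B => inferInstanceAs (Decidable ((symmDiff A.1 B.1).card = 1))

/-- A set system is well-graded if the Hamming distance between any two members
equals their distance in the one-inclusion graph. -/
def WellGraded {α : Type*} [DecidableEq α] (F : Finset (Finset α)) : Prop :=
  ∀ A B : {A : Finset α // A ∈ F},
    (oneInclusion F).dist A B = (symmDiff A.1 B.1).card

/-- The set of essential elements of the domain: those contained in some member
of `F` and omitted by some member of `F`. -/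
def essSet {α : Type*} [DecidableEq α] [Fintype α] (F : Finset (Finset α)) :
    Finset α :=
  Finset.univ.filter (fun x => (∃ A ∈ F, x ∈ A) ∧ ∃ B ∈ F, x ∉ B)

/-- For a well-graded family, `|ess_F(X)| + 1 ≤ |F| ≤ |E(G_F)| + 1`; in
particular the additionality `|F| − |ess_F(X)|` is positive. -/
theorem wellGraded_card_bounds {α : Type*} [DecidableEq α] [Fintype α]
    (F : Finset (Finset α)) (hF : F.Nonempty) (hWG : WellGraded F) :
    (essSet F).card + 1 ≤ F.card ∧
      F.card ≤ (oneInclusion F).edgeFinset.card + 1 := by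
  classical
  obtain ⟨A₀f, hA₀f⟩ := hF
  let A₀ : {A : Finset α // A ∈ F} := ⟨A₀f, hA₀f⟩
  have hreach : ∀ B : {A : Finset α // A ∈ F}, (oneInclusion F).Reachable B A₀ := by
    intro B
    by_cases hB : B = A₀
    · subst hB; exact SimpleGraph.Reachable.refl _
    · refine SimpleGraph.Reachable.of_dist_ne_zero ?_
      rw [hWG B A₀]
      simp only [ne_eq, Finset.card_eq_zero]
      intro h
      exact hB (Subtype.ext (symmDiff_eq_bot.mp h))
  have hparent : ∀ B : {A : Finset α // A ∈ F}, B ≠ A₀ → ∃ C : {A : Finset α // A ∈ F}, (oneInclusion F).Adj B C ∧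
      (oneInclusion F).dist C A₀ + 1 = (oneInclusion F).dist B A₀ := by
    intro B hB
    obtain ⟨p, hp⟩ := (hreach B).exists_walk_length_eq_dist
    cases p with
    | nil => exact absurd rfl hB
    | @cons _ C _ h q =>
      refine ⟨C, h, ?_⟩
      have h1 : (oneInclusion F).dist C A₀ ≤ q.length := SimpleGraph.dist_le q
      obtain ⟨r, hr⟩ := (hreach C).exists_walk_length_eq_dist
      have h2 : (oneInclusion F).dist B A₀ ≤ (SimpleGraph.Walk.cons h r).length :=
        SimpleGraph.dist_le _
      rw [SimpleGraph.Walk.length_cons] at h2 hp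
      omega
  let P : {A : Finset α // A ∈ F} → {A : Finset α // A ∈ F} := fun B => if h : B = A₀ then A₀ else (hparent B h).choose
  have hPadj : ∀ B (h : B ≠ A₀), (oneInclusion F).Adj B (P B) := by
    intro B h
    show (oneInclusion F).Adj B (if h' : B = A₀ then A₀ else (hparent B h').choose)
    rw [dif_neg h]
    exact (hparent B h).choose_spec.1
  have hPdist : ∀ B (h : B ≠ A₀), (oneInclusion F).dist (P B) A₀ + 1 = (oneInclusion F).dist B A₀ := by
    intro B h
    show (oneInclusion F).dist (if h' : B = A₀ then A₀ else (hparent B h').choose) A₀ + 1 = (oneInclusion F).dist B A₀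
    rw [dif_neg h]
    exact (hparent B h).choose_spec.2
  have hPcard : ∀ B (h : B ≠ A₀), (symmDiff B.1 (P B).1).card = 1 :=
    fun B h => hPadj B h
  -- key existence lemma for the lower bound
  have key : ∀ n (A : {A : Finset α // A ∈ F}), (oneInclusion F).dist A A₀ = n → ∀ x, x ∈ symmDiff A.1 A₀.1 →
      ∃ B : {A : Finset α // A ∈ F}, B ≠ A₀ ∧ symmDiff B.1 (P B).1 = {x} := by
    intro n
    induction n using Nat.strong_induction_on with
    | _ n ih =>
      intro A hA x hx
      have hAne : A ≠ A₀ := by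
        rintro rfl
        simp [symmDiff_self] at hx
      by_cases hxe : x ∈ symmDiff A.1 (P A).1
      · refine ⟨A, hAne, ?_⟩
        obtain ⟨y, hy⟩ := Finset.card_eq_one.mp (hPcard A hAne)
        rw [hy] at hxe ⊢
        rw [Finset.mem_singleton] at hxe
        rw [hxe]
      · have hx' : x ∈ symmDiff (P A).1 A₀.1 := by
          have ht := symmDiff_triangle A.1 (P A).1 A₀.1
          have := ht hx
          rw [Finset.sup_eq_union, Finset.mem_union] at this
          tauto
        have hd := hPdist A hAne
        exact ih ((oneInclusion F).dist (P A) A₀) (by omega) (P A) rfl x hx'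
  -- lower bound
  have h1 : (essSet F).card ≤ (Finset.univ.erase A₀).card := by
    have hex : ∀ x ∈ essSet F, ∃ B : {A : Finset α // A ∈ F}, B ≠ A₀ ∧ symmDiff B.1 (P B).1 = {x} := by
      intro x hx
      rw [essSet, Finset.mem_filter] at hx
      obtain ⟨-, ⟨A, hA, hxA⟩, ⟨B, hB, hxB⟩⟩ := hx
      by_cases hx0 : x ∈ A₀f
      · refine key _ ⟨B, hB⟩ rfl x ?_
        rw [Finset.mem_symmDiff]
        exact Or.inr ⟨hx0, hxB⟩
      · refine key _ ⟨A, hA⟩ rfl x ?_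
        rw [Finset.mem_symmDiff]
        exact Or.inl ⟨hxA, hx0⟩
    refine Finset.card_le_card_of_injOn
      (fun x => if h : ∃ B : {A : Finset α // A ∈ F}, B ≠ A₀ ∧ symmDiff B.1 (P B).1 = {x}
        then h.choose else A₀) ?_ ?_
    · intro x hx
      dsimp only
      rw [dif_pos (hex x hx)]
      exact Finset.mem_erase.mpr ⟨(hex x hx).choose_spec.1, Finset.mem_univ _⟩
    · intro x hx y hy hxy
      simp only [dif_pos (hex x hx), dif_pos (hex y hy)] at hxy
      have hx2 := (hex x hx).choose_spec.2
      have hy2 := (hex y hy).choose_spec.2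
      rw [hxy, hy2] at hx2
      exact (Finset.singleton_inj.mp hx2).symm
  -- upper bound
  have h2 : (Finset.univ.erase A₀).card ≤ (oneInclusion F).edgeFinset.card := by
    refine Finset.card_le_card_of_injOn (fun B => s(B, P B)) ?_ ?_
    · intro B hB
      rw [Finset.mem_coe, SimpleGraph.mem_edgeFinset, SimpleGraph.mem_edgeSet]
      exact hPadj B (Finset.mem_erase.mp hB).1
    · intro B hB B' hB' heq
      have hBne := (Finset.mem_erase.mp hB).1
      have hB'ne := (Finset.mem_erase.mp hB').1
      rw [Sym2.eq_iff] at heq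
      rcases heq with ⟨h, -⟩ | ⟨h1', h2'⟩
      · exact h
      · exfalso
        have d1 := hPdist B hBne
        have d2 := hPdist B' hB'ne
        rw [← h1'] at d2
        rw [h2'] at d1
        omega
  have hcard : (Finset.univ.erase A₀ : Finset {A : Finset α // A ∈ F}).card = F.card - 1 := by
    rw [Finset.card_erase_of_mem (Finset.mem_univ _), Finset.card_univ,
      Fintype.card_coe]
  have hF1 : 1 ≤ F.card := Finset.card_pos.mpr ⟨A₀f, hA₀f⟩
  rw [hcard] at h1 h2
  exact ⟨by omega, by omega⟩
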